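/- arXiv:1404.6600 — 2 statements merged into one kernel-verified Lean document; each statement's English description precedes it below -/
import Mathlib

section
/- Let P(z) = a_n z^n + Σ_{j=μ}^{n} a_{n−j} z^{n−j}, 1 ≤ μ ≤ n, be a polynomial of degree n having all its zeros in |z| ≤ k, where k ≤ 1, and set m = min_{|z|=k} |P(z)|. Then A_μ ≤ k^μ, where A_μ = (n(|a_n| − m/k^n) k^{2μ} + μ|a_{n−μ}| k^{μ−1}) / (n(|a_n| − m/k^n) k^{μ−1} + μ|a_{n−μ}|). -/
open Polynomial Metric


lemma newton_bound (n μ : ℕ) (F : Polynomial ℂ) (k : ℝ)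
    (hμ1 : 1 ≤ μ) (hμn : μ ≤ n) (hdeg : F.natDegree = n)
    (hcoeff : ∀ j, 1 ≤ j → j < μ → F.coeff (n - j) = 0)
    (hzeros : ∀ z : ℂ, F.eval z = 0 → ‖z‖ ≤ k) :
    (μ : ℝ) * ‖F.coeff (n - μ)‖ ≤ (n : ℝ) * ‖F.coeff n‖ * k ^ μ := by
  have hn1 : 1 ≤ n := le_trans hμ1 hμn
  have hF0 : F ≠ 0 := by
    intro h; rw [h, natDegree_zero] at hdeg; omega
  have hlc : F.coeff n = F.leadingCoeff := by rw [← hdeg]; rfl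
  have hlc0 : F.leadingCoeff ≠ 0 := leadingCoeff_ne_zero.mpr hF0
  have hcard : Multiset.card F.roots = F.natDegree :=
    Polynomial.splits_iff_card_roots.mp (IsAlgClosed.splits F)
  have hk0 : 0 ≤ k := by
    obtain ⟨z, hz⟩ := IsAlgClosed.exists_root (k := ℂ) F (by rw [degree_eq_natDegree hF0, hdeg]; exact_mod_cast (by omega : n ≠ 0))
    exact le_trans (norm_nonneg z) (hzeros z hz)
  -- esymm of roots vanish for 1 ≤ j < μ
  have hes : ∀ j, 1 ≤ j → j < μ → F.roots.esymm j = 0 := by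
    intro j h1 h2
    have hjn : n - j ≤ F.natDegree := by omega
    have := Polynomial.coeff_eq_esymm_roots_of_card hcard hjn
    rw [hcoeff j h1 h2, hdeg] at this
    have hnj : n - (n - j) = j := by omega
    rw [hnj] at this
    have h2' : ((-1 : ℂ)) ^ j ≠ 0 := pow_ne_zero _ (by norm_num)
    field_simp at this
    simpa [hlc0] using this.symm
  have hesμ : F.coeff (n - μ) = F.leadingCoeff * (-1) ^ μ * F.roots.esymm μ := by
    have hjn : n - μ ≤ F.natDegree := by omega
    have := Polynomial.coeff_eq_esymm_roots_of_card hcard hjn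
    rw [hdeg] at this
    have hnj : n - (n - μ) = μ := by omega
    rwa [hnj] at this
  -- enumerate roots by a list
  set l := F.roots.toList with hl
  have hlen : l.length = n := by rw [hl, Multiset.length_toList, hcard, hdeg]
  have hluniv : (Finset.univ.val.map l.get : Multiset ℂ) = (↑l : Multiset ℂ) := by
    rw [Fin.univ_def]
    change (Multiset.map l.get ↑(List.finRange l.length)) = _
    rw [Multiset.map_coe, ← List.ofFn_eq_map, List.ofFn_get]
  have hlroots : (↑l : Multiset ℂ) = F.roots := by rw [hl, Multiset.coe_toList]
  -- evaluate Newton's identity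
  have hnewton := congrArg (MvPolynomial.aeval l.get)
    (MvPolynomial.psum_eq_mul_esymm_sub_sum (Fin l.length) ℂ μ (by omega))
  rw [map_sub, map_mul, map_mul] at hnewton
  have haes : ∀ j, MvPolynomial.aeval l.get (MvPolynomial.esymm (Fin l.length) ℂ j)
      = F.roots.esymm j := by
    intro j
    rw [MvPolynomial.aeval_esymm_eq_multiset_esymm, hluniv, hlroots]
  have hsum0 : MvPolynomial.aeval l.get
      (∑ a ∈ Finset.HasAntidiagonal.antidiagonal μ with a.1 ∈ Set.Ioo 0 μ,
        (-1) ^ a.1 * MvPolynomial.esymm (Fin l.length) ℂ a.1 * MvPolynomial.psum (Fin l.length) ℂ a.2) = 0 := by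
    rw [map_sum]
    apply Finset.sum_eq_zero
    intro a ha
    simp only [Finset.mem_filter, Set.mem_Ioo] at ha
    rw [map_mul, map_mul, haes, hes a.1 ha.2.1 ha.2.2]
    ring
  have hpsum : MvPolynomial.aeval l.get (MvPolynomial.psum (Fin l.length) ℂ μ)
      = ∑ i, l.get i ^ μ := by simp [MvPolynomial.psum]
  rw [hsum0, sub_zero, hpsum] at hnewton
  simp only [map_pow, map_neg, map_one, map_natCast, haes] at hnewton
  -- bound
  have hstep : (μ : ℝ) * ‖F.roots.esymm μ‖ ≤ (n : ℝ) * k ^ μ := by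
    have : ‖(-1 : ℂ) ^ (μ + 1) * (μ : ℂ) * F.roots.esymm μ‖
        = (μ : ℝ) * ‖F.roots.esymm μ‖ := by
      simp
    rw [← this, ← hnewton]
    calc ‖∑ i, l.get i ^ μ‖ ≤ ∑ i : Fin l.length, ‖l.get i ^ μ‖ := by
          exact norm_sum_le _ _
      _ ≤ ∑ _i : Fin l.length, k ^ μ := by
          apply Finset.sum_le_sum
          intro i _
          rw [norm_pow]
          refine pow_le_pow_left₀ (norm_nonneg _) ?_ μ
          refine hzeros _ ?_
          have hmem : l.get i ∈ F.roots := by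
            rw [← hlroots]
            exact Multiset.mem_coe.mpr (by exact l.get_mem i)
          exact isRoot_of_mem_roots hmem
      _ = (n : ℝ) * k ^ μ := by rw [Finset.sum_const, Finset.card_univ, Fintype.card_fin, hlen, nsmul_eq_mul]
  calc (μ : ℝ) * ‖F.coeff (n - μ)‖
      = ‖F.leadingCoeff‖ * ((μ : ℝ) * ‖F.roots.esymm μ‖) := by
        rw [hesμ]; simp [norm_mul]; ring
    _ ≤ ‖F.leadingCoeff‖ * ((n : ℝ) * k ^ μ) := by
        exact mul_le_mul_of_nonneg_left hstep (norm_nonneg _)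
    _ = (n : ℝ) * ‖F.coeff n‖ * k ^ μ := by rw [hlc]; ring

lemma rev_eval_rel (P : Polynomial ℂ) (w : ℂ) (hw : w ≠ 0) :
    P.reverse.eval w⁻¹ * w ^ P.natDegree = P.eval w := by
  letI := invertibleOfNonzero hw
  have := Polynomial.eval₂_reverse_mul_pow (RingHom.id ℂ) w P
  simpa [invOf_eq_inv, Polynomial.eval₂_id] using this

lemma rev_lower_bound (P : Polynomial ℂ) (n : ℕ) (k m : ℝ)
    (hdeg : P.natDegree = n) (hP0 : P ≠ 0) (hk : 0 < k) (hm : 0 < m)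
    (hlow : ∀ z : ℂ, ‖z‖ = k → m ≤ ‖P.eval z‖)
    (hzeros : ∀ z : ℂ, P.eval z = 0 → ‖z‖ ≤ k) :
    ∀ w : ℂ, ‖w‖ ≤ 1 / k → m / k ^ n ≤ ‖P.reverse.eval w‖ := by
  have hr : (0:ℝ) < 1 / k := by positivity
  -- nonvanishing on the closed ball
  have hQne : ∀ w : ℂ, ‖w‖ ≤ 1 / k → P.reverse.eval w ≠ 0 := by
    intro w hwle h0
    rcases eq_or_ne w 0 with rfl | hw
    · rw [← Polynomial.coeff_zero_eq_eval_zero, Polynomial.coeff_zero_reverse] at h0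
      exact Polynomial.leadingCoeff_ne_zero.mpr hP0 h0
    · have hrel := rev_eval_rel P w⁻¹ (inv_ne_zero hw)
      rw [inv_inv] at hrel
      have hz : P.eval w⁻¹ = 0 := by
        rw [← hrel, h0, zero_mul]
      have h1 : ‖w⁻¹‖ ≤ k := hzeros _ hz
      have h2 : ‖w⁻¹‖ = (‖w‖)⁻¹ := norm_inv _
      have hw0 : 0 < ‖w‖ := by
        exact norm_pos_iff.mpr hw
      have : ‖w‖ = 1 / k := by
        rw [h2] at h1
        have : 1 / k ≤ ‖w‖ := by
          rw [div_le_iff₀ hk]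
          calc (1:ℝ) = ‖w‖ * (‖w‖)⁻¹ := by field_simp
            _ ≤ ‖w‖ * k := by
                exact mul_le_mul_of_nonneg_left h1 (le_of_lt hw0)
        linarith [hwle]
      have habs : ‖w⁻¹‖ = k := by rw [h2, this]; field_simp
      have := hlow _ habs
      rw [hz] at this
      simp at this
      linarith
  -- max modulus
  intro w hwle
  have hwcl : w ∈ closure (ball (0:ℂ) (1/k)) := by
    rw [closure_ball (0:ℂ) (ne_of_gt hr)]
    simpa [mem_closedBall, Complex.dist_eq] using hwle
  have hdiff : DiffContOnCl ℂ (fun z => (P.reverse.eval z)⁻¹) (ball (0:ℂ) (1/k)) := by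
    apply DifferentiableOn.diffContOnCl
    rw [closure_ball (0:ℂ) (ne_of_gt hr)]
    apply DifferentiableOn.inv
    · exact (P.reverse.differentiable).differentiableOn
    · intro x hx
      exact hQne x (by simpa [mem_closedBall, Complex.dist_eq] using hx)
  have hbound : ∀ z ∈ frontier (ball (0:ℂ) (1/k)),
      ‖(P.reverse.eval z)⁻¹‖ ≤ k ^ n / m := by
    intro z hz
    rw [frontier_ball (0:ℂ) (ne_of_gt hr)] at hz
    have hzabs : ‖z‖ = 1 / k := by
      simpa [mem_sphere, Complex.dist_eq] using hz
    have hz0 : z ≠ 0 := by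
      intro h; rw [h] at hzabs; simp at hzabs; linarith
    have hrel := rev_eval_rel P z⁻¹ (inv_ne_zero hz0)
    rw [inv_inv] at hrel
    have hinv : ‖z⁻¹‖ = k := by
      rw [norm_inv, hzabs]; field_simp
    have hlow' := hlow _ hinv
    rw [← hrel, norm_mul, norm_pow, hdeg, hinv] at hlow'
    have hQpos : 0 < ‖P.reverse.eval z‖ := by
      rw [norm_pos_iff]
      exact hQne _ (le_of_eq hzabs)
    rw [norm_inv, inv_le_comm₀ hQpos (by positivity), inv_div,
      div_le_iff₀ (by positivity)]
    exact hlow'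
  have := Complex.norm_le_of_forall_mem_frontier_norm_le isBounded_ball hdiff hbound hwcl
  rw [norm_inv] at this
  have hQpos : 0 < ‖P.reverse.eval w‖ := by
    rw [norm_pos_iff]; exact hQne _ hwle
  rw [inv_le_comm₀ hQpos (by positivity)] at this
  rwa [inv_div] at this

lemma key_ineq (n μ : ℕ) (P : Polynomial ℂ) (k m : ℝ)
    (hμ1 : 1 ≤ μ) (hμn : μ ≤ n) (hdeg : P.natDegree = n)
    (hcoeff : ∀ j, 1 ≤ j → j < μ → P.coeff (n - j) = 0)
    (hzeros : ∀ z : ℂ, P.eval z = 0 → ‖z‖ ≤ k)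
    (hm0 : 0 ≤ m)
    (hlow : ∀ z : ℂ, ‖z‖ = k → m ≤ ‖P.eval z‖) :
    m / k ^ n ≤ ‖P.coeff n‖ ∧
    (μ : ℝ) * ‖P.coeff (n - μ)‖ ≤
      (n : ℝ) * (‖P.coeff n‖ - m / k ^ n) * k ^ μ := by
  have hn1 : 1 ≤ n := le_trans hμ1 hμn
  have hP0 : P ≠ 0 := by intro h; rw [h, natDegree_zero] at hdeg; omega
  rcases eq_or_lt_of_le hm0 with hm | hm
  · constructor
    · rw [← hm, zero_div]; exact norm_nonneg _
    · rw [← hm, zero_div, sub_zero]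
      exact newton_bound n μ P k hμ1 hμn hdeg hcoeff hzeros
  · have hkpos : 0 < k := by
      obtain ⟨z, hz⟩ := IsAlgClosed.exists_root (k := ℂ) P
        (by rw [degree_eq_natDegree hP0, hdeg]; exact_mod_cast (by omega : n ≠ 0))
      rcases lt_or_ge 0 k with h | h
      · exact h
      · exfalso
        have hzk : ‖z‖ ≤ k := hzeros z hz
        have hz0 : ‖z‖ = 0 := le_antisymm (by linarith) (norm_nonneg z)
        have hk0 : k = 0 := le_antisymm h (by rw [← hz0]; exact hzk)
        have := hlow z (by rw [hz0, hk0])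
        rw [hz] at this
        simp at this
        linarith
    have hrev := rev_lower_bound P n k m hdeg hP0 hkpos hm hlow hzeros
    have hlc : P.coeff n = P.leadingCoeff := by rw [← hdeg]; rfl
    have han : m / k ^ n ≤ ‖P.coeff n‖ := by
      have := hrev 0 (by simp; positivity)
      rwa [← Polynomial.coeff_zero_eq_eval_zero, Polynomial.coeff_zero_reverse, ← hlc] at this
    refine ⟨han, ?_⟩
    set a := ‖P.coeff n‖ with ha_def
    have hapos : 0 < a := lt_of_lt_of_le (by positivity) han
    have hmain : ∀ t ∈ Set.Ioo (0:ℝ) 1,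
        (μ : ℝ) * ‖P.coeff (n - μ)‖ ≤ (n : ℝ) * (a - t * (m / k ^ n)) * k ^ μ := by
      intro t ht
      obtain ⟨ht0, ht1⟩ := ht
      set r := t * (m / k ^ n) with hr_def
      have hrpos : 0 < r := by positivity
      have hrlt : r < m / k ^ n := by
        rw [hr_def]
        nlinarith [div_pos hm (pow_pos hkpos n)]
      have hrlea : r < a := lt_of_lt_of_le hrlt han
      set c : ℂ := -((r / a : ℝ) : ℂ) * P.coeff n with hc_def
      have hcabs : ‖c‖ = r := by
        rw [hc_def, norm_mul, norm_neg, Complex.norm_real, ← ha_def,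
          Real.norm_of_nonneg (by positivity)]
        field_simp
      set F := P + C c * X ^ n with hF_def
      have hFn : F.coeff n = (1 - ((r / a : ℝ) : ℂ)) * P.coeff n := by
        rw [hF_def, coeff_add, coeff_C_mul, coeff_X_pow, if_pos rfl]
        ring
      have habsFn : ‖F.coeff n‖ = a - r := by
        rw [hFn, norm_mul, ← ha_def]
        have : ((1 : ℂ) - ((r / a : ℝ) : ℂ)) = (((1 - r / a : ℝ)) : ℂ) := by push_cast; ring
        rw [this, Complex.norm_real, Real.norm_of_nonneg (by rw [sub_nonneg, div_le_one hapos]; exact le_of_lt hrlea)]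
        field_simp
      have hFne : F.coeff n ≠ 0 := by
        intro h
        rw [h] at habsFn
        simp at habsFn
        linarith
      have hFdeg : F.natDegree = n := by
        apply le_antisymm
        · refine le_trans (natDegree_add_le _ _) (max_le (le_of_eq hdeg) ?_)
          exact le_trans (natDegree_C_mul_le _ _) (le_of_eq (natDegree_X_pow n))
        · exact le_natDegree_of_ne_zero hFne
      have hFco : ∀ j, 1 ≤ j → F.coeff (n - j) = P.coeff (n - j) := by
        intro j hj
        rw [hF_def, coeff_add, coeff_C_mul, coeff_X_pow, if_neg (by omega)]
        ring
      have hFzeros : ∀ z : ℂ, F.eval z = 0 → ‖z‖ ≤ k := by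
        intro z hz
        by_contra hgt
        push_neg at hgt
        have hz0 : z ≠ 0 := by
          intro h; rw [h] at hgt; simp at hgt; linarith
        have hrel := rev_eval_rel P z hz0
        rw [hdeg] at hrel
        have hinvle : ‖z⁻¹‖ ≤ 1 / k := by
          rw [norm_inv, one_div]
          exact inv_anti₀ hkpos hgt.le
        have hlb := hrev _ hinvle
        have hPz : ‖P.eval z‖ = ‖P.reverse.eval z⁻¹‖ * ‖z‖ ^ n := by
          rw [← hrel, norm_mul, norm_pow]
        have hFz : P.eval z = -c * z ^ n := by
          have : P.eval z + c * z ^ n = 0 := by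
            rw [hF_def] at hz
            simpa [eval_add, eval_mul, eval_pow] using hz
          linear_combination this
        have hPz2 : ‖P.eval z‖ = r * ‖z‖ ^ n := by
          rw [hFz, norm_mul, norm_neg, hcabs, norm_pow]
        have hzpow : 0 < ‖z‖ ^ n := pow_pos (lt_trans hkpos hgt) n
        nlinarith [mul_le_mul_of_nonneg_right hlb (le_of_lt hzpow)]
      have hNB := newton_bound n μ F k hμ1 hμn hFdeg
        (fun j h1 h2 => by rw [hFco j h1, hcoeff j h1 h2]) hFzeros
      rw [hFco μ hμ1, habsFn] at hNB
      exact hNB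
    have hlim : Filter.Tendsto (fun t : ℝ => (n : ℝ) * (a - t * (m / k ^ n)) * k ^ μ)
        (nhdsWithin 1 (Set.Iio 1)) (nhds ((n : ℝ) * (a - m / k ^ n) * k ^ μ)) := by
      have hc : Continuous fun t : ℝ => (n : ℝ) * (a - t * (m / k ^ n)) * k ^ μ := by
        fun_prop
      refine Filter.Tendsto.mono_left ?_ nhdsWithin_le_nhds
      have := hc.tendsto 1
      simpa using this
    refine ge_of_tendsto hlim ?_
    filter_upwards [Ioo_mem_nhdsLT_of_mem (by norm_num : (1:ℝ) ∈ Set.Ioc 0 1)] with t ht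
    exact hmain t ht

/-- **Lemma 7.** If `P(z) = aₙzⁿ + Σ_{j=μ}^n a_{n-j} z^{n-j}`, `1 ≤ μ ≤ n`, has all its
zeros in `|z| ≤ k ≤ 1`, and `m = min_{|z|=k} |P(z)|`, then `A_μ ≤ k^μ` where
`A_μ = (n(|aₙ| - m/kⁿ) k^{2μ} + μ|a_{n-μ}| k^{μ-1}) / (n(|aₙ| - m/kⁿ) k^{μ-1} + μ|a_{n-μ}|)`. -/
theorem A_mu_le_k_pow_mu
    (n μ : ℕ) (P : Polynomial ℂ) (k : ℝ)
    (hμ1 : 1 ≤ μ) (hμn : μ ≤ n)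
    (hdeg : P.natDegree = n)
    (hcoeff : ∀ j, 1 ≤ j → j < μ → P.coeff (n - j) = 0)
    (hk : k ≤ 1)
    (hzeros : ∀ z : ℂ, P.eval z = 0 → ‖z‖ ≤ k)
    (m A : ℝ)
    (hm : m = sInf ((fun z => ‖P.eval z‖) '' sphere (0 : ℂ) k))
    (hA : A = ((n : ℝ) * (‖P.coeff n‖ - m / k ^ n) * k ^ (2 * μ)
              + (μ : ℝ) * ‖P.coeff (n - μ)‖ * k ^ (μ - 1))
            / ((n : ℝ) * (‖P.coeff n‖ - m / k ^ n) * k ^ (μ - 1)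
              + (μ : ℝ) * ‖P.coeff (n - μ)‖)) :
    A ≤ k ^ μ := by
  have hn1 : 1 ≤ n := le_trans hμ1 hμn
  have hP0 : P ≠ 0 := by intro h; rw [h, natDegree_zero] at hdeg; omega
  have hk0 : 0 ≤ k := by
    obtain ⟨z, hz⟩ := IsAlgClosed.exists_root (k := ℂ) P
      (by rw [degree_eq_natDegree hP0, hdeg]; exact_mod_cast (by omega : n ≠ 0))
    exact le_trans (norm_nonneg z) (hzeros z hz)
  -- m facts
  have hmem : ((k : ℂ)) ∈ sphere (0 : ℂ) k := by
    simp [abs_of_nonneg hk0]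
  have hbdd : BddBelow ((fun z => ‖P.eval z‖) '' sphere (0 : ℂ) k) := by
    refine ⟨0, ?_⟩
    rintro x ⟨z, _, rfl⟩
    exact norm_nonneg _
  have hm0 : 0 ≤ m := by
    rw [hm]
    apply Real.sInf_nonneg
    rintro x ⟨z, _, rfl⟩
    exact norm_nonneg _
  have hlow : ∀ z : ℂ, ‖z‖ = k → m ≤ ‖P.eval z‖ := by
    intro z hz
    rw [hm]
    apply csInf_le hbdd
    exact ⟨z, by simpa [mem_sphere, Complex.dist_eq] using hz, rfl⟩
  obtain ⟨han, hKI⟩ := key_ineq n μ P k m hμ1 hμn hdeg hcoeff hzeros hm0 hlow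
  -- algebra
  set S : ℝ := (n : ℝ) * (‖P.coeff n‖ - m / k ^ n) with hS_def
  set B : ℝ := (μ : ℝ) * ‖P.coeff (n - μ)‖ with hB_def
  set u : ℝ := k ^ (μ - 1) with hu_def
  have hku : k ^ μ = k * u := by
    rw [hu_def, ← pow_succ']
    congr 1
    omega
  have h2u : k ^ (2 * μ) = (k * u) ^ 2 := by
    rw [two_mul, pow_add, hku]
    ring
  have hSnn : 0 ≤ S := by
    rw [hS_def]
    have : 0 ≤ ‖P.coeff n‖ - m / k ^ n := sub_nonneg.mpr han
    positivity
  have hBnn : 0 ≤ B := by rw [hB_def]; positivity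
  have hunn : 0 ≤ u := by rw [hu_def]; positivity
  have hKI' : B ≤ S * (k * u) := by rw [← hku]; exact hKI
  rw [hA, hku, h2u]
  rcases eq_or_lt_of_le (show 0 ≤ S * u + B by positivity) with hD | hD
  · rw [← hD, div_zero]
    positivity
  · rw [div_le_iff₀ hD]
    nlinarith [mul_nonneg (mul_nonneg (sub_nonneg.mpr hk) hunn) (sub_nonneg.mpr hKI'), hSnn, hBnn, hk0]
end

section
/- Let P(z) = a_n z^n + Σ_{ν=μ}^{n} a_{n−ν} z^{n−ν}, 1 ≤ μ ≤ n, be a polynomial of degree n having all its zeros in |z| < k, where k ≤ 1, and set m = min_{|z|=k} |P(z)|. Then for every complex number α with |α| ≥ k^μ and every z with |z| = 1, |D_α P(z)| ≥ (|α| − k^μ)|P′(z)| + k^μ · mn/k^n. -/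
open Polynomial Metric

noncomputable def Complex.abs : AbsoluteValue ℂ ℝ := NormedField.toAbsoluteValue ℂ

lemma Complex.norm_eq_abs (z : ℂ) : ‖z‖ = Complex.abs z := rfl

lemma Complex.sq_abs (z : ℂ) : Complex.abs z ^ 2 = Complex.normSq z := Complex.sq_norm z

lemma Complex.abs_apply (z : ℂ) : Complex.abs z = Real.sqrt (Complex.normSq z) := by
  rw [← Complex.norm_eq_abs, Complex.norm_def]

lemma Complex.abs_ofReal (r : ℝ) : Complex.abs (r : ℂ) = |r| := by
  rw [← Complex.norm_eq_abs]; simp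

lemma Complex.abs_natCast (n : ℕ) : Complex.abs (n : ℂ) = n := by
  rw [← Complex.norm_eq_abs]; simp

lemma Complex.continuous_abs : Continuous Complex.abs := continuous_norm

lemma re_term {u : ℂ} (hu : Complex.abs u < 1) : (-(1:ℝ)/2) ≤ (u / (1 - u)).re := by
  have hns : Complex.normSq u < 1 := by
    have h := Complex.sq_abs u
    nlinarith [Complex.abs.nonneg u]
  have h0 : 0 < Complex.normSq (1 - u) := by
    rw [Complex.normSq_pos]
    intro h
    have : u = 1 := by linear_combination -h
    rw [this] at hu; simp at hu
  rw [Complex.div_re]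
  rw [Complex.normSq_apply] at h0 hns ⊢
  have h1 : ((1:ℂ) - u).re = 1 - u.re := by simp
  have h2 : ((1:ℂ) - u).im = -u.im := by simp
  rw [h1, h2] at h0 ⊢
  rw [← add_div, le_div_iff₀ h0]
  nlinarith

lemma reflect_one_X_sub_C (r : ℂ) : reflect 1 (X - C r) = 1 - C r * X := by
  have h : (X : ℂ[X]) - C r = X ^ 1 + C (-r) * X ^ 0 := by
    simp [map_neg]; ring
  rw [h, reflect_add, reflect_monomial, reflect_C_mul_X_pow]
  simp [revAt_le, map_neg]
  ring

lemma reflect_prod (Z : Multiset ℂ) :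
    reflect (Multiset.card Z) (Z.map fun r => X - C r).prod
      = (Z.map fun r => 1 - C r * X).prod := by
  induction Z using Multiset.induction_on with
  | empty => simp
  | cons r Z ih =>
    rw [Multiset.map_cons, Multiset.prod_cons, Multiset.map_cons, Multiset.prod_cons,
      Multiset.card_cons, show Multiset.card Z + 1 = 1 + Multiset.card Z from by omega,
      reflect_mul _ _ (natDegree_X_sub_C_le r) (by
        rw [natDegree_multiset_prod_X_sub_C_eq_card]),
      reflect_one_X_sub_C, ih]

lemma eval_reflect' {p : ℂ[X]} {N : ℕ} (hp : p.natDegree ≤ N) {w : ℂ} (hw : w ≠ 0) :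
    (reflect N p).eval w = w ^ N * p.eval w⁻¹ := by
  have hdr : (reflect N p).natDegree < N + 1 := by
    have : (reflect N p).natDegree ≤ N := by
      rw [natDegree_le_iff_coeff_eq_zero]
      intro i hi
      rw [coeff_reflect]
      have : revAt N i = i := by
        exact revAt_eq_self_of_lt (by omega)
      rw [this]
      exact coeff_eq_zero_of_natDegree_lt (lt_of_le_of_lt hp hi)
    omega
  rw [eval_eq_sum_range' hdr, eval_eq_sum_range' (lt_of_le_of_lt hp (Nat.lt_succ_self N)),
    Finset.mul_sum]
  rw [← Finset.sum_range_reflect]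
  apply Finset.sum_congr rfl
  intro i hi
  have hiN : i ≤ N := by simpa [Nat.lt_succ_iff] using hi
  rw [coeff_reflect, show N + 1 - 1 - i = N - i from by omega, revAt_le (by omega),
    show N - (N - i) = i from by omega]
  rw [pow_sub₀ w hw hiN]
  ring

lemma deriv_prod_eval (Z : Multiset ℂ) (w : ℂ) (h : ∀ r ∈ Z, (1:ℂ) - r * w ≠ 0) :
    (derivative (Z.map fun r => 1 - C r * X).prod).eval w * w
      = -(((Z.map fun r => r * w / (1 - r * w)).sum) * ((Z.map fun r => 1 - r * w).prod)) := by
  induction Z using Multiset.induction_on with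
  | empty => simp
  | cons r Z ih =>
    have hr : (1:ℂ) - r * w ≠ 0 := h r (Multiset.mem_cons_self r Z)
    have hZ : ∀ s ∈ Z, (1:ℂ) - s * w ≠ 0 := fun s hs => h s (Multiset.mem_cons_of_mem hs)
    rw [Multiset.map_cons, Multiset.prod_cons, derivative_mul, Multiset.map_cons,
      Multiset.sum_cons, Multiset.map_cons, Multiset.prod_cons]
    have hd : derivative ((1:ℂ[X]) - C r * X) = -C r := by
      simp [derivative_sub]
    rw [hd, eval_add, eval_mul, eval_mul, add_mul, mul_assoc _ _ w, mul_assoc _ _ w, ih hZ]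
    have he : ((1:ℂ[X]) - C r * X).eval w = 1 - r * w := by simp
    rw [he, eval_neg, eval_C]
    have hprod : ((Z.map fun r => 1 - C r * X).prod).eval w = (Z.map fun s => 1 - s * w).prod := by
      rw [eval_multiset_prod, Multiset.map_map]
      congr 1
      apply Multiset.map_congr rfl
      intro s _; simp
    rw [hprod]
    field_simp
    ring

lemma minmod (P : ℂ[X]) (n : ℕ) (hn : 1 ≤ n) (hdeg : P.natDegree = n)
    (k m : ℝ) (hk0 : 0 < k)
    (hzeros : ∀ z : ℂ, P.eval z = 0 → Complex.abs z < k)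
    (hm_le : ∀ z : ℂ, Complex.abs z = k → m ≤ Complex.abs (P.eval z))
    (hm0 : 0 < m) :
    ∀ w : ℂ, Complex.abs w ≤ k⁻¹ → m / k ^ n ≤ Complex.abs ((reflect n P).eval w) := by
  have hP0 : P ≠ 0 := by
    intro h; rw [h, natDegree_zero] at hdeg; omega
  set R := reflect n P with hR
  have hkinv : (0:ℝ) < k⁻¹ := inv_pos.2 hk0
  have hR0 : ∀ w ∈ closedBall (0:ℂ) k⁻¹, R.eval w ≠ 0 := by
    intro w hw
    rcases eq_or_ne w 0 with rfl | hw0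
    · rw [← coeff_zero_eq_eval_zero, hR, coeff_reflect, revAt_le (Nat.zero_le n), Nat.sub_zero]
      rw [← hdeg, coeff_natDegree]
      exact leadingCoeff_ne_zero.2 hP0
    · rw [hR, eval_reflect' hdeg.le hw0]
      refine mul_ne_zero (pow_ne_zero _ hw0) ?_
      intro hzero
      have h1 : Complex.abs w⁻¹ < k := hzeros _ hzero
      have h2 : k ≤ Complex.abs w⁻¹ := by
        rw [map_inv₀]
        rw [mem_closedBall, dist_zero_right, Complex.norm_eq_abs] at hw
        have hwpos : 0 < Complex.abs w := by
          simp [AbsoluteValue.pos_iff, hw0]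
        calc k = (k⁻¹)⁻¹ := (inv_inv k).symm
        _ ≤ (Complex.abs w)⁻¹ := inv_anti₀ hwpos hw
      linarith
  have hfront : ∀ w ∈ frontier (ball (0:ℂ) k⁻¹), ‖(R.eval w)⁻¹‖ ≤ k ^ n / m := by
    intro w hw
    rw [frontier_ball (0:ℂ) (ne_of_gt hkinv)] at hw
    rw [mem_sphere_zero_iff_norm, Complex.norm_eq_abs] at hw
    have hw0 : w ≠ 0 := by
      intro h; rw [h] at hw; simp at hw; linarith
    have hz : Complex.abs w⁻¹ = k := by rw [map_inv₀, hw, inv_inv]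
    have hPz := hm_le _ hz
    have hRv : Complex.abs (R.eval w) = (k⁻¹) ^ n * Complex.abs (P.eval w⁻¹) := by
      rw [hR, eval_reflect' hdeg.le hw0, map_mul, map_pow, hw]
    have hRpos : m / k ^ n ≤ Complex.abs (R.eval w) := by
      rw [hRv, inv_pow, div_eq_inv_mul]
      exact mul_le_mul_of_nonneg_left hPz (by positivity)
    rw [norm_inv, Complex.norm_eq_abs]
    have h1 : 0 < m / k ^ n := by positivity
    calc (Complex.abs (R.eval w))⁻¹ ≤ (m / k ^ n)⁻¹ :=
          inv_anti₀ h1 hRpos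
    _ = k ^ n / m := by rw [inv_div]
  have hdiff : DiffContOnCl ℂ (fun w => (R.eval w)⁻¹) (ball (0:ℂ) k⁻¹) := by
    apply DifferentiableOn.diffContOnCl
    rw [closure_ball (0:ℂ) (ne_of_gt hkinv)]
    intro w hw
    exact ((R.differentiableAt.differentiableWithinAt).inv (hR0 w hw))
  intro w hw
  have hmem : w ∈ closure (ball (0:ℂ) k⁻¹) := by
    rw [closure_ball (0:ℂ) (ne_of_gt hkinv), mem_closedBall, dist_zero_right,
      Complex.norm_eq_abs]
    exact hw
  have := Complex.norm_le_of_forall_mem_frontier_norm_le isBounded_ball hdiff hfront hmem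
  rw [norm_inv, Complex.norm_eq_abs] at this
  have hRne : R.eval w ≠ 0 := hR0 w (by
    rw [mem_closedBall, dist_zero_right, Complex.norm_eq_abs]; exact hw)
  have hRpos : 0 < Complex.abs (R.eval w) := by
    simp [AbsoluteValue.pos_iff, hRne]
  rw [inv_eq_one_div, div_le_div_iff₀ hRpos hm0] at this
  rw [div_le_iff₀ (by positivity : (0:ℝ) < k ^ n)]
  linarith

lemma key_gap (n μ : ℕ) (Q : ℂ[X]) (k : ℝ) (hk0 : 0 < k) (hk : k ≤ 1)
    (hμ1 : 1 ≤ μ) (hμn : μ ≤ n) (hdeg : Q.natDegree = n)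
    (hcoeff : ∀ j, 1 ≤ j → j < μ → Q.coeff (n - j) = 0)
    (hzeros : ∀ z : ℂ, Q.eval z = 0 → Complex.abs z < k)
    (z₀ : ℂ) (hz₀ : Complex.abs z₀ = 1) :
    Complex.abs ((n:ℂ) * Q.eval z₀ - z₀ * (derivative Q).eval z₀)
      ≤ k ^ μ * Complex.abs ((derivative Q).eval z₀) := by
  have hn : 1 ≤ n := le_trans hμ1 hμn
  have hQ0 : Q ≠ 0 := by intro h; rw [h, natDegree_zero] at hdeg; omega
  have hsplits : Splits Q := IsAlgClosed.splits Q
  set Z := Q.roots with hZ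
  have hcard : Multiset.card Z = n := by
    have h := hsplits.natDegree_eq_card_roots
    rw [hZ, ← h, hdeg]
  set b := Q.leadingCoeff with hb
  have hb0 : b ≠ 0 := leadingCoeff_ne_zero.2 hQ0
  have hfact : Q = C b * (Z.map fun r => X - C r).prod := hsplits.eq_prod_roots
  have hroots : ∀ r ∈ Z, Complex.abs r < k := by
    intro r hr
    exact hzeros r ((mem_roots hQ0).1 hr)
  set A := (Z.map fun r => X - C r).prod with hA
  set D := (Z.map fun r => 1 - C r * X).prod with hD
  have hDrefl : reflect n A = D := by rw [← hcard]; exact reflect_prod Z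
  have hDcoeff : ∀ j, 1 ≤ j → j < μ → D.coeff j = 0 := by
    intro j h1 h2
    rw [← hDrefl, coeff_reflect, revAt_le (le_trans (le_of_lt h2) hμn)]
    have hQc := hcoeff j h1 h2
    rw [hfact, coeff_C_mul] at hQc
    exact (mul_eq_zero.1 hQc).resolve_left hb0
  set N := -(X * derivative D) with hN
  have hdvd : X ^ μ ∣ N := by
    rw [hN, dvd_neg]
    have hXμ : (X:ℂ[X]) ^ μ = X ^ (μ - 1) * X := by rw [← pow_succ]; congr 1; omega
    rw [hXμ]
    have hdvd' : (X:ℂ[X]) ^ (μ-1) ∣ derivative D := by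
      rw [X_pow_dvd_iff]
      intro d hd
      rw [coeff_derivative, hDcoeff (d+1) (by omega) (by omega), zero_mul]
    have h3 := mul_dvd_mul hdvd' (dvd_refl (X:ℂ[X]))
    rwa [mul_comm (derivative D) X] at h3
  obtain ⟨N₁, hN₁⟩ := hdvd
  set E := C (n:ℂ) * D + N with hE
  have hDeval : ∀ w : ℂ, D.eval w = (Z.map fun r => 1 - r * w).prod := by
    intro w
    rw [hD, eval_multiset_prod, Multiset.map_map]
    congr 1
    apply Multiset.map_congr rfl
    intro s _; simp
  have hfac_abs : ∀ w : ℂ, Complex.abs w ≤ k⁻¹ → ∀ r ∈ Z, Complex.abs (r * w) < 1 := by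
    intro w hw r hr
    rw [map_mul]
    calc Complex.abs r * Complex.abs w ≤ Complex.abs r * k⁻¹ :=
          mul_le_mul_of_nonneg_left hw (Complex.abs.nonneg r)
    _ < k * k⁻¹ := mul_lt_mul_of_pos_right (hroots r hr) (inv_pos.2 hk0)
    _ = 1 := mul_inv_cancel₀ (ne_of_gt hk0)
  have hfac_ne : ∀ w : ℂ, Complex.abs w ≤ k⁻¹ → ∀ r ∈ Z, (1:ℂ) - r * w ≠ 0 := by
    intro w hw r hr h
    have h1 := hfac_abs w hw r hr
    have : r * w = 1 := by linear_combination -h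
    rw [this] at h1; simp at h1
  have hDne : ∀ w : ℂ, Complex.abs w ≤ k⁻¹ → D.eval w ≠ 0 := by
    intro w hw
    rw [hDeval]
    apply Multiset.prod_ne_zero
    intro h0
    obtain ⟨r, hr, hre⟩ := Multiset.mem_map.1 h0
    exact hfac_ne w hw r hr hre
  set S : ℂ → ℂ := fun w => (Z.map fun r => r * w / (1 - r * w)).sum with hS
  have hNeval : ∀ w : ℂ, Complex.abs w ≤ k⁻¹ → N.eval w = S w * D.eval w := by
    intro w hw
    rw [hN, eval_neg, eval_mul, eval_X, hDeval]
    have h2 := deriv_prod_eval Z w (hfac_ne w hw)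
    rw [← hD] at h2
    rw [hS]
    linear_combination -h2
  have hEeval : ∀ w : ℂ, Complex.abs w ≤ k⁻¹ → E.eval w = ((n:ℂ) + S w) * D.eval w := by
    intro w hw
    rw [hE, eval_add, eval_mul, eval_C, hNeval w hw]; ring
  have hSre : ∀ w : ℂ, Complex.abs w ≤ k⁻¹ → -(n:ℝ)/2 ≤ (S w).re := by
    intro w hw
    have hmap : (S w).re = ((Z.map fun r => r * w / (1 - r * w)).map Complex.reAddGroupHom).sum := by
      rw [hS, ← AddMonoidHom.map_multiset_sum]
      rfl
    rw [hmap, Multiset.map_map]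
    have hsum := Multiset.card_nsmul_le_sum
      (s := Z.map (Complex.reAddGroupHom ∘ fun r => r * w / (1 - r * w))) (a := -(1:ℝ)/2) ?_
    · rw [Multiset.card_map, hcard, nsmul_eq_mul] at hsum
      calc -(n:ℝ)/2 = (n:ℝ) * (-(1:ℝ)/2) := by ring
      _ ≤ _ := hsum
    · intro x hx
      obtain ⟨r, hr, hre⟩ := Multiset.mem_map.1 hx
      rw [← hre]
      exact re_term (hfac_abs w hw r hr)
  have habs : ∀ w : ℂ, Complex.abs w ≤ k⁻¹ →
      Complex.abs (S w) ≤ Complex.abs ((n:ℂ) + S w) ∧ ((n:ℂ) + S w) ≠ 0 := by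
    intro w hw
    have hre := hSre w hw
    have hn1 : (1:ℝ) ≤ (n:ℝ) := by exact_mod_cast hn
    constructor
    · rw [Complex.abs_apply, Complex.abs_apply]
      apply Real.sqrt_le_sqrt
      rw [Complex.normSq_apply, Complex.normSq_apply, Complex.add_re, Complex.add_im]
      simp only [Complex.natCast_re, Complex.natCast_im, zero_add]
      nlinarith
    · intro h
      have h2 : ((n:ℂ) + S w).re = 0 := by rw [h]; simp
      rw [Complex.add_re, Complex.natCast_re] at h2
      nlinarith
  have hEne : ∀ w : ℂ, Complex.abs w ≤ k⁻¹ → E.eval w ≠ 0 := by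
    intro w hw
    rw [hEeval w hw]
    exact mul_ne_zero (habs w hw).2 (hDne w hw)
  have hNE : ∀ w : ℂ, Complex.abs w ≤ k⁻¹ →
      Complex.abs (N.eval w) ≤ Complex.abs (E.eval w) := by
    intro w hw
    rw [hNeval w hw, hEeval w hw, map_mul, map_mul]
    exact mul_le_mul_of_nonneg_right (habs w hw).1 (Complex.abs.nonneg _)
  have hkinv : (0:ℝ) < k⁻¹ := inv_pos.2 hk0
  have hmax : ∀ w : ℂ, Complex.abs w ≤ k⁻¹ →
      Complex.abs (N₁.eval w) ≤ k ^ μ * Complex.abs (E.eval w) := by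
    intro w hw
    have hfr : ∀ v ∈ frontier (ball (0:ℂ) k⁻¹), ‖N₁.eval v / E.eval v‖ ≤ k ^ μ := by
      intro v hv
      rw [frontier_ball _ (ne_of_gt hkinv)] at hv
      rw [mem_sphere_zero_iff_norm, Complex.norm_eq_abs] at hv
      have hvle : Complex.abs v ≤ k⁻¹ := le_of_eq hv
      have hEv : Complex.abs (E.eval v) > 0 := by
        simp [AbsoluteValue.pos_iff, hEne v hvle]
      have hNv : Complex.abs (N.eval v) = (k⁻¹) ^ μ * Complex.abs (N₁.eval v) := by
        rw [hN₁, eval_mul, eval_pow, eval_X, map_mul, map_pow, hv]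
      have h2 := hNE v hvle
      rw [hNv] at h2
      rw [norm_div, Complex.norm_eq_abs, Complex.norm_eq_abs, div_le_iff₀ hEv]
      calc Complex.abs (N₁.eval v) = k ^ μ * ((k⁻¹) ^ μ * Complex.abs (N₁.eval v)) := by
            rw [← mul_assoc, ← mul_pow, mul_inv_cancel₀ (ne_of_gt hk0), one_pow, one_mul]
      _ ≤ k ^ μ * Complex.abs (E.eval v) :=
            mul_le_mul_of_nonneg_left h2 (by positivity)
    have hdiff : DiffContOnCl ℂ (fun w => N₁.eval w / E.eval w) (ball (0:ℂ) k⁻¹) := by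
      apply DifferentiableOn.diffContOnCl
      rw [closure_ball (0:ℂ) (ne_of_gt hkinv)]
      intro v hv
      rw [mem_closedBall, dist_zero_right, Complex.norm_eq_abs] at hv
      exact ((N₁.differentiableAt.div E.differentiableAt (hEne v hv))).differentiableWithinAt
    have hmem : w ∈ closure (ball (0:ℂ) k⁻¹) := by
      rw [closure_ball (0:ℂ) (ne_of_gt hkinv), mem_closedBall, dist_zero_right,
        Complex.norm_eq_abs]
      exact hw
    have h3 := Complex.norm_le_of_forall_mem_frontier_norm_le isBounded_ball hdiff hfr hmem
    rw [norm_div, Complex.norm_eq_abs, Complex.norm_eq_abs] at h3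
    have hEw : 0 < Complex.abs (E.eval w) := by
      simp [AbsoluteValue.pos_iff, hEne w hw]
    rw [div_le_iff₀ hEw] at h3
    linarith [h3]
  -- now specialize at w₀ = z₀⁻¹
  have hz00 : z₀ ≠ 0 := by
    intro h; rw [h] at hz₀; simp at hz₀
  set w₀ := z₀⁻¹ with hw₀
  have hw00 : w₀ ≠ 0 := inv_ne_zero hz00
  have hw0abs : Complex.abs w₀ = 1 := by rw [hw₀, map_inv₀, hz₀, inv_one]
  have hw0le : Complex.abs w₀ ≤ k⁻¹ := by
    rw [hw0abs]
    calc (1:ℝ) = 1⁻¹ := by norm_num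
    _ ≤ k⁻¹ := inv_anti₀ hk0 hk
  have hID : ∀ w : ℂ, w ≠ 0 → b * D.eval w = w ^ n * Q.eval w⁻¹ := by
    intro w hw
    have hQe : Q.eval w⁻¹ = b * (Z.map fun r => w⁻¹ - r).prod := by
      conv_lhs => rw [hfact]
      rw [eval_mul, eval_C, eval_multiset_prod, Multiset.map_map]
      congr 2
      apply Multiset.map_congr rfl
      intro s _; simp
    have hpow : w ^ n = (Z.map fun _ => w).prod := by
      rw [Multiset.map_const', Multiset.prod_replicate, hcard]
    rw [hDeval, hQe, hpow]
    calc b * (Z.map fun r => 1 - r * w).prod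
        = b * (Z.map fun r => w * (w⁻¹ - r)).prod := by
          congr 2
          apply Multiset.map_congr rfl
          intro s _
          field_simp
      _ = b * ((Z.map fun _ => w).prod * (Z.map fun r => w⁻¹ - r).prod) := by
          rw [← Multiset.prod_map_mul]
      _ = (Z.map fun _ => w).prod * (b * (Z.map fun r => w⁻¹ - r).prod) := by ring
  have hg : HasDerivAt (fun w => b * D.eval w) (b * (derivative D).eval w₀) w₀ :=
    (D.hasDerivAt w₀).const_mul b
  have hf2 : HasDerivAt (fun w : ℂ => Q.eval w⁻¹)
      ((derivative Q).eval w₀⁻¹ * (-(w₀ ^ 2)⁻¹)) w₀ := by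
    have h := (Q.hasDerivAt w₀⁻¹).comp w₀ (hasDerivAt_inv hw00)
    exact h
  have hf : HasDerivAt (fun w : ℂ => w ^ n * Q.eval w⁻¹)
      ((n:ℂ) * w₀ ^ (n-1) * Q.eval w₀⁻¹ + w₀ ^ n * ((derivative Q).eval w₀⁻¹ * (-(w₀ ^ 2)⁻¹)))
      w₀ := (hasDerivAt_pow n w₀).mul hf2
  have heq : (fun w => b * D.eval w) =ᶠ[nhds w₀] (fun w : ℂ => w ^ n * Q.eval w⁻¹) := by
    filter_upwards [compl_singleton_mem_nhds hw00] with w hw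
    exact hID w hw
  have hder : b * (derivative D).eval w₀
      = (n:ℂ) * w₀ ^ (n-1) * Q.eval w₀⁻¹ + w₀ ^ n * ((derivative Q).eval w₀⁻¹ * (-(w₀ ^ 2)⁻¹)) :=
    hg.unique (hf.congr_of_eventuallyEq heq)
  have hzw : w₀⁻¹ = z₀ := inv_inv z₀
  rw [hzw] at hder
  have hbD : b * D.eval w₀ = w₀ ^ n * Q.eval z₀ := by rw [hID w₀ hw00, hzw]
  have hpow' : w₀ * w₀ ^ (n-1) = w₀ ^ n := by
    rw [← pow_succ']; congr 1; omega
  have hbN : b * N.eval w₀ = -(w₀ ^ n * ((n:ℂ) * Q.eval z₀ - z₀ * (derivative Q).eval z₀)) := by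
    rw [hN, eval_neg, eval_mul, eval_X]
    calc b * -(w₀ * (derivative D).eval w₀) = -(w₀ * (b * (derivative D).eval w₀)) := by ring
    _ = -(w₀ * ((n:ℂ) * w₀ ^ (n-1) * Q.eval z₀
          + w₀ ^ n * ((derivative Q).eval z₀ * (-(w₀ ^ 2)⁻¹)))) := by rw [hder]
    _ = -(w₀ ^ n * ((n:ℂ) * Q.eval z₀ - z₀ * (derivative Q).eval z₀)) := by
        have h4 : w₀ * ((n:ℂ) * w₀ ^ (n-1) * Q.eval z₀) = (n:ℂ) * w₀ ^ n * Q.eval z₀ := by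
          rw [show w₀ * ((n:ℂ) * w₀ ^ (n-1) * Q.eval z₀)
              = (n:ℂ) * (w₀ * w₀ ^ (n-1)) * Q.eval z₀ from by ring, hpow']
        have h5 : w₀ * (w₀ ^ n * ((derivative Q).eval z₀ * (-(w₀ ^ 2)⁻¹)))
            = -(w₀ ^ n * (z₀ * (derivative Q).eval z₀)) := by
          rw [← hzw]
          field_simp
        linear_combination -h4 - h5
  have hbE : b * E.eval w₀ = w₀ ^ n * (z₀ * (derivative Q).eval z₀) := by
    rw [hE, eval_add, eval_mul, eval_C]
    calc b * ((n:ℂ) * D.eval w₀ + N.eval w₀)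
        = (n:ℂ) * (b * D.eval w₀) + b * N.eval w₀ := by ring
    _ = _ := by rw [hbD, hbN]; ring
  have hNabs : Complex.abs (N.eval w₀) = Complex.abs (N₁.eval w₀) := by
    rw [hN₁, eval_mul, eval_pow, eval_X, map_mul, map_pow, hw0abs, one_pow, one_mul]
  have h1 : Complex.abs (b * N.eval w₀) ≤ k ^ μ * Complex.abs (b * E.eval w₀) := by
    rw [map_mul, map_mul, hNabs]
    calc Complex.abs b * Complex.abs (N₁.eval w₀)
        ≤ Complex.abs b * (k ^ μ * Complex.abs (E.eval w₀)) :=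
          mul_le_mul_of_nonneg_left (hmax w₀ hw0le) (Complex.abs.nonneg b)
    _ = k ^ μ * (Complex.abs b * Complex.abs (E.eval w₀)) := by ring
  rw [hbN, hbE] at h1
  simpa [Complex.abs.map_neg, map_mul, map_pow, hw0abs, hz₀] using h1

/-- If `P(z) = aₙzⁿ + Σ_{ν=μ}^n a_{n-ν} z^{n-ν}`, `1 ≤ μ ≤ n`, has all its zeros in
`|z| < k ≤ 1` and `m = min_{|z|=k} |P(z)|`, then for every `α` with `|α| ≥ k^μ` and
every `z` with `|z| = 1`, `|D_α P(z)| ≥ (|α| - k^μ)|P'(z)| + k^μ mn/kⁿ`. -/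
theorem polar_derivative_refined_pointwise
    (n μ : ℕ) (P : Polynomial ℂ) (k : ℝ) (α : ℂ)
    (hμ1 : 1 ≤ μ) (hμn : μ ≤ n)
    (hdeg : P.natDegree = n)
    (hcoeff : ∀ j, 1 ≤ j → j < μ → P.coeff (n - j) = 0)
    (hk : k ≤ 1)
    (hzeros : ∀ z : ℂ, P.eval z = 0 → ‖z‖ < k)
    (hα : k ^ μ ≤ ‖α‖)
    (m : ℝ)
    (hm : m = sInf ((fun z => ‖P.eval z‖) '' sphere (0 : ℂ) k)) :
    ∀ z : ℂ, ‖z‖ = 1 →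
      ‖(n : ℂ) * P.eval z + (α - z) * (Polynomial.derivative P).eval z‖
        ≥ (‖α‖ - k ^ μ) * ‖(Polynomial.derivative P).eval z‖
          + k ^ μ * (m * (n : ℝ) / k ^ n) := by
  intro z₀ hz₀
  simp only [Complex.norm_eq_abs] at hzeros hα hm hz₀ ⊢
  have hn : 1 ≤ n := le_trans hμ1 hμn
  have hP0 : P ≠ 0 := by intro h; rw [h, natDegree_zero] at hdeg; omega
  have hk0 : 0 < k := by
    have hdegpos : 0 < P.degree := natDegree_pos_iff_degree_pos.1 (by omega)
    obtain ⟨z₁, hz₁⟩ := Complex.exists_root hdegpos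
    exact lt_of_le_of_lt (Complex.abs.nonneg z₁) (hzeros z₁ hz₁)
  have hz00 : z₀ ≠ 0 := by
    intro h; rw [h] at hz₀; simp at hz₀
  have hme : ∀ z : ℂ, Complex.abs z = k → m ≤ Complex.abs (P.eval z) := by
    intro z hz
    rw [hm]
    apply csInf_le
    · exact ⟨0, fun x hx => by obtain ⟨y, _, rfl⟩ := hx; exact Complex.abs.nonneg _⟩
    · exact ⟨z, by rwa [mem_sphere_zero_iff_norm, Complex.norm_eq_abs], rfl⟩
  have hm0 : 0 < m := by
    have hcont : Continuous fun z : ℂ => Complex.abs (P.eval z) := by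
      exact Complex.continuous_abs.comp (Polynomial.continuous P)
    have hcpt : IsCompact ((fun z => Complex.abs (P.eval z)) '' sphere (0:ℂ) k) :=
      (isCompact_sphere 0 k).image hcont
    have hne : (sphere (0:ℂ) k).Nonempty := NormedSpace.sphere_nonempty.2 hk0.le
    have hmem := hcpt.sInf_mem (hne.image _)
    rw [← hm] at hmem
    obtain ⟨z, hz, hval⟩ := hmem
    rw [mem_sphere_zero_iff_norm, Complex.norm_eq_abs] at hz
    rw [← hval]
    have hPz : P.eval z ≠ 0 := by
      intro h0
      have h1 := hzeros z h0
      rw [hz] at h1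
      exact lt_irrefl k h1
    simpa [AbsoluteValue.pos_iff] using hPz
  have hL1 := minmod P n hn hdeg k m hk0 hzeros hme hm0
  have hk1 : (1:ℝ) ≤ k⁻¹ := by
    calc (1:ℝ) = 1⁻¹ := by norm_num
    _ ≤ k⁻¹ := inv_anti₀ hk0 hk
  have hP1 : m / k ^ n ≤ Complex.abs (P.eval z₀) := by
    have h := hL1 z₀⁻¹ (by rw [map_inv₀, hz₀, inv_one]; exact hk1)
    rw [eval_reflect' hdeg.le (inv_ne_zero hz00), inv_inv, map_mul, map_pow, map_inv₀, hz₀] at h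
    simpa using h
  have hlead : m / k ^ n ≤ Complex.abs P.leadingCoeff := by
    have h := hL1 0 (by simpa using hk0.le.trans (by nlinarith : k ≤ k⁻¹))
    rw [← coeff_zero_eq_eval_zero, coeff_reflect, revAt_le (Nat.zero_le n), Nat.sub_zero] at h
    have h2 : P.coeff n = P.leadingCoeff := by rw [← hdeg, coeff_natDegree]
    rwa [h2] at h
  have hnR : (0:ℝ) < (n:ℝ) := by exact_mod_cast hn
  set c : ℝ := m * n / k ^ n with hc
  have hc0 : 0 < c := by
    rw [hc]; exact div_pos (mul_pos hm0 hnR) (by positivity)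
  set Pd : ℂ := (derivative P).eval z₀ with hPd
  have hβ : ((m / k ^ n : ℝ):ℂ) * (n:ℂ) = ((c:ℝ):ℂ) := by
    rw [hc]; push_cast; ring
  have HT : ∀ lam : ℂ, Complex.abs lam < 1 →
      Complex.abs ((n:ℂ) * P.eval z₀ - z₀ * Pd)
        ≤ k ^ μ * Complex.abs (Pd + lam * ((m / k ^ n : ℝ) : ℂ) * n * z₀ ^ (n-1)) := by
    intro lam hlam
    set G : ℂ[X] := P + C (lam * ((m / k ^ n : ℝ):ℂ)) * X ^ n with hG
    have hGcoeffn : G.coeff n = P.leadingCoeff + lam * ((m / k ^ n : ℝ):ℂ) := by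
      rw [hG, coeff_add, coeff_C_mul, coeff_X_pow, if_pos rfl, mul_one, ← hdeg, coeff_natDegree]
    have hlc : Complex.abs (lam * ((m / k^n : ℝ):ℂ)) < m / k^n := by
      rw [map_mul, Complex.abs_ofReal, abs_of_pos (by positivity)]
      calc Complex.abs lam * (m / k ^ n) < 1 * (m / k ^ n) :=
            mul_lt_mul_of_pos_right hlam (by positivity)
      _ = m / k ^ n := one_mul _
    have hGn : G.coeff n ≠ 0 := by
      rw [hGcoeffn]
      intro h
      have h2 : P.leadingCoeff = -(lam * ((m / k^n : ℝ):ℂ)) := by linear_combination h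
      rw [h2, Complex.abs.map_neg] at hlead
      linarith
    have hGdeg : G.natDegree = n := by
      apply le_antisymm
      · refine le_trans (natDegree_add_le _ _) ?_
        exact max_le hdeg.le (le_trans (natDegree_C_mul_le _ _) (natDegree_X_pow n).le)
      · exact le_natDegree_of_ne_zero hGn
    have hGcoeff : ∀ j, 1 ≤ j → j < μ → G.coeff (n - j) = 0 := by
      intro j h1 h2
      rw [hG, coeff_add, coeff_C_mul, coeff_X_pow, if_neg (by omega), mul_zero, add_zero]
      exact hcoeff j h1 h2
    have hGzeros : ∀ z : ℂ, G.eval z = 0 → Complex.abs z < k := by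
      intro z hzz
      by_contra hge
      push_neg at hge
      have hzne : z ≠ 0 := by
        intro h; rw [h] at hge; simp at hge; linarith
      have hPz : P.eval z = -(lam * ((m / k^n:ℝ):ℂ) * z ^ n) := by
        rw [hG, eval_add, eval_mul, eval_C, eval_pow, eval_X] at hzz
        linear_combination hzz
      have hinv : Complex.abs z⁻¹ ≤ k⁻¹ := by
        rw [map_inv₀]; exact inv_anti₀ hk0 hge
      have h := hL1 z⁻¹ hinv
      rw [eval_reflect' hdeg.le (inv_ne_zero hzne), inv_inv, map_mul, map_pow, map_inv₀,
        hPz, Complex.abs.map_neg, map_mul, map_mul, map_pow, Complex.abs_ofReal,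
        abs_of_pos (by positivity : (0:ℝ) < m / k ^ n)] at h
      have hzp : 0 < Complex.abs z := lt_of_lt_of_le hk0 hge
      have hsimp : (Complex.abs z)⁻¹ ^ n * (Complex.abs lam * (m / k ^ n) * Complex.abs z ^ n)
          = Complex.abs lam * (m / k ^ n) := by
        rw [inv_pow, mul_comm ((Complex.abs z ^ n)⁻¹), mul_assoc,
          mul_inv_cancel₀ (pow_pos hzp n).ne', mul_one]
      rw [hsimp] at h
      nlinarith [hlam, (by positivity : (0:ℝ) < m / k ^ n)]
    have hkey := key_gap n μ G k hk0 hk hμ1 hμn hGdeg hGcoeff hGzeros z₀ hz₀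
    have hGe : G.eval z₀ = P.eval z₀ + lam * ((m / k^n:ℝ):ℂ) * z₀ ^ n := by
      rw [hG]; simp only [eval_add, eval_mul, eval_C, eval_pow, eval_X]
    have hGd : (derivative G).eval z₀ = Pd + lam * ((m / k^n:ℝ):ℂ) * n * z₀ ^ (n-1) := by
      rw [hPd, hG]
      simp only [derivative_add, derivative_C_mul, derivative_X_pow, eval_add, eval_mul,
        eval_C, eval_natCast, eval_pow, eval_X]
      ring
    rw [hGe, hGd] at hkey
    have hp : z₀ * z₀ ^ (n-1) = z₀ ^ n := by
      rw [← pow_succ']; congr 1; omega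
    have hcancel : (n:ℂ) * (P.eval z₀ + lam * ((m / k^n:ℝ):ℂ) * z₀ ^ n)
        - z₀ * (Pd + lam * ((m / k^n:ℝ):ℂ) * n * z₀ ^ (n-1))
        = (n:ℂ) * P.eval z₀ - z₀ * Pd := by
      linear_combination (-(lam * ((m / k^n:ℝ):ℂ) * (n:ℂ))) * hp
    rw [hcancel] at hkey
    exact hkey
  have hKK : Complex.abs ((n:ℂ) * P.eval z₀ - z₀ * Pd) ≤ k ^ μ * (Complex.abs Pd - c) := by
    rcases lt_or_ge (Complex.abs Pd) c with hlt | hge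
    · exfalso
      have hPeq : (n:ℂ) * P.eval z₀ = z₀ * Pd := by
        rcases eq_or_ne Pd 0 with h0 | hne
        · have h := HT 0 (by norm_num)
          rw [h0] at h
          simp only [zero_mul, add_zero, map_zero, mul_zero, sub_zero] at h
          have h2 : Complex.abs ((n:ℂ) * P.eval z₀) = 0 :=
            le_antisymm h (Complex.abs.nonneg _)
          rw [h0, mul_zero]
          exact Complex.abs.eq_zero.1 h2
        · set lam : ℂ := -(Pd / (((c:ℝ):ℂ) * z₀ ^ (n-1))) with hlam
          have hz0p : Complex.abs (z₀ ^ (n-1)) = 1 := by rw [map_pow, hz₀, one_pow]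
          have hcC : ((c:ℝ):ℂ) ≠ 0 := by
            simp only [ne_eq, Complex.ofReal_eq_zero]; exact ne_of_gt hc0
          have hzp0 : z₀ ^ (n-1) ≠ 0 := pow_ne_zero _ hz00
          have hlamabs : Complex.abs lam = Complex.abs Pd / c := by
            rw [hlam, Complex.abs.map_neg, map_div₀, map_mul, Complex.abs_ofReal, hz0p,
              mul_one, abs_of_pos hc0]
          have h := HT lam (by rw [hlamabs]; exact (div_lt_one hc0).2 hlt)
          have hx : Pd / (((c:ℝ):ℂ) * z₀ ^ (n-1)) * (((c:ℝ):ℂ) * z₀ ^ (n-1)) = Pd :=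
            div_mul_cancel₀ _ (mul_ne_zero hcC hzp0)
          have hcc : lam * ((m / k^n : ℝ):ℂ) * n * z₀ ^ (n-1) = -Pd := by
            rw [hlam]
            linear_combination (-(Pd / (((c:ℝ):ℂ) * z₀ ^ (n-1)) * z₀ ^ (n-1))) * hβ - hx
          rw [hcc] at h
          simp only [add_neg_cancel, map_zero, mul_zero] at h
          have h2 : Complex.abs ((n:ℂ) * P.eval z₀ - z₀ * Pd) = 0 :=
            le_antisymm h (Complex.abs.nonneg _)
          rw [← sub_eq_zero]
          exact Complex.abs.eq_zero.1 h2
      have habs : (n:ℝ) * Complex.abs (P.eval z₀) = Complex.abs Pd := by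
        have := congrArg Complex.abs hPeq
        rwa [map_mul, map_mul, Complex.abs_natCast, hz₀, one_mul] at this
      have h3 : c ≤ (n:ℝ) * Complex.abs (P.eval z₀) := by
        rw [hc]
        calc m * n / k ^ n = (n:ℝ) * (m / k ^ n) := by ring
        _ ≤ (n:ℝ) * Complex.abs (P.eval z₀) := by
            exact mul_le_mul_of_nonneg_left hP1 hnR.le
      rw [habs] at h3
      linarith
    · have hPd0 : Pd ≠ 0 := by
        intro h; rw [h] at hge; simp at hge; linarith
      have habsPd : 0 < Complex.abs Pd := by simpa [AbsoluteValue.pos_iff] using hPd0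
      have hstep : ∀ t : ℝ, 0 ≤ t → t < 1 →
          Complex.abs ((n:ℂ) * P.eval z₀ - z₀ * Pd) ≤ k ^ μ * (Complex.abs Pd - t * c) := by
        intro t ht0 ht1
        set lam : ℂ := -(((t / Complex.abs Pd : ℝ)):ℂ) * Pd / z₀ ^ (n-1) with hlam
        have hz0p : Complex.abs (z₀ ^ (n-1)) = 1 := by rw [map_pow, hz₀, one_pow]
        have hzp0 : z₀ ^ (n-1) ≠ 0 := pow_ne_zero _ hz00
        have hlamabs : Complex.abs lam = t := by
          rw [hlam, map_div₀, map_mul, Complex.abs.map_neg, Complex.abs_ofReal, hz0p, div_one,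
            abs_of_nonneg (div_nonneg ht0 habsPd.le)]
          exact div_mul_cancel₀ _ (ne_of_gt habsPd)
        have h := HT lam (by rw [hlamabs]; exact ht1)
        have hcast : (((t * c / Complex.abs Pd : ℝ)):ℂ)
            = (((t / Complex.abs Pd : ℝ)):ℂ) * ((c:ℝ):ℂ) := by
          push_cast; ring
        have hx2 : Pd / z₀ ^ (n-1) * z₀ ^ (n-1) = Pd := div_mul_cancel₀ _ hzp0
        have hcc : Pd + lam * ((m / k^n : ℝ):ℂ) * n * z₀ ^ (n-1)
            = Pd * (1 - (((t * c / Complex.abs Pd : ℝ)):ℂ)) := by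
          rw [hlam, hcast]
          linear_combination (-((((t / Complex.abs Pd : ℝ)):ℂ) * (Pd / z₀ ^ (n-1)) * z₀ ^ (n-1))) * hβ
            + (-((((t / Complex.abs Pd : ℝ)):ℂ) * ((c:ℝ):ℂ))) * hx2
        rw [hcc, map_mul] at h
        have h4 : Complex.abs (1 - (((t * c / Complex.abs Pd : ℝ)):ℂ))
            = 1 - t * c / Complex.abs Pd := by
          rw [show (1:ℂ) - (((t * c / Complex.abs Pd : ℝ)):ℂ)
              = (((1 - t * c / Complex.abs Pd : ℝ)):ℂ) from by push_cast; ring]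
          rw [Complex.abs_ofReal, abs_of_nonneg]
          rw [sub_nonneg, div_le_one habsPd]
          nlinarith
        rw [h4] at h
        have h5 : Complex.abs Pd * (1 - t * c / Complex.abs Pd) = Complex.abs Pd - t * c := by
          field_simp
        rw [h5] at h
        exact h
      have hlim : Filter.Tendsto (fun t : ℝ => k ^ μ * (Complex.abs Pd - t * c))
          (nhdsWithin 1 (Set.Iio 1)) (nhds (k ^ μ * (Complex.abs Pd - c))) := by
        apply Filter.Tendsto.mono_left _ nhdsWithin_le_nhds
        have hcont : Continuous fun t : ℝ => k ^ μ * (Complex.abs Pd - t * c) :=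
          continuous_const.mul (continuous_const.sub (continuous_id.mul continuous_const))
        have := hcont.tendsto 1
        simpa using this
      apply ge_of_tendsto hlim
      filter_upwards [Ioo_mem_nhdsLT_of_mem (⟨zero_lt_one, le_refl (1:ℝ)⟩ : (1:ℝ) ∈ Set.Ioc 0 1)]
        with t ht
      exact hstep t ht.1.le ht.2
  have htri : Complex.abs α * Complex.abs Pd - Complex.abs ((n:ℂ) * P.eval z₀ - z₀ * Pd)
      ≤ Complex.abs ((n:ℂ) * P.eval z₀ + (α - z₀) * Pd) := by
    have h1 : (n:ℂ) * P.eval z₀ + (α - z₀) * Pd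
        = α * Pd + ((n:ℂ) * P.eval z₀ - z₀ * Pd) := by ring
    rw [h1]
    have h2 := Complex.abs.add_le (α * Pd + ((n:ℂ) * P.eval z₀ - z₀ * Pd))
      (-((n:ℂ) * P.eval z₀ - z₀ * Pd))
    rw [Complex.abs.map_neg] at h2
    simp only [add_neg_cancel_right] at h2
    rw [map_mul] at h2
    linarith
  have hexp : k ^ μ * (Complex.abs Pd - c) = k ^ μ * Complex.abs Pd - k ^ μ * c := by ring
  rw [ge_iff_le]
  rw [hexp] at hKK
  nlinarith [htri, hKK]
end
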